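/- arXiv:0907.0958 — 3 statements merged into one kernel-verified Lean document; each statement's English description precedes it below -/
import Mathlib

section
/- (McMullen's duality.) Let V be a linear subspace of ℝ^N and let V^⊥ be its orthogonal complement. Let L = V ∩ ℤ^N and L^⊥ = V^⊥ ∩ ℤ^N, and assume that the rank of L equals dim(V) (i.e. L spans V). Then L^⊥ has rank dim(V^⊥) = N − dim(V), and Vol(L^⊥) = Vol(L). -/
/-- McMullen's duality: Let `V` be a linear subspace of `ℝ^N` and `V^⊥` its
orthogonal complement, and let `L = V ∩ ℤ^N`, `L^⊥ = V^⊥ ∩ ℤ^N`.  If `L` spans `V`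
(i.e. its rank `m` equals `dim V`, witnessed by a ℤ-basis `b` of `L` consisting of `m`
linearly independent vectors), then `L^⊥` has rank `N − m = dim V^⊥`, i.e. it has a
ℤ-basis of `N − m` linearly independent vectors `c`, and `Vol(L^⊥) = Vol(L)`, where the
covolume is the square root of the Gram determinant of a basis. -/
theorem stmt_2 (N : ℕ) (V : Submodule ℝ (Fin N → ℝ)) (m : ℕ)
    (hm : m = Module.finrank ℝ V)
    (L Lp : Set (Fin N → ℝ))
    (hL : L = {x | x ∈ V ∧ ∀ j, ∃ k : ℤ, x j = (k : ℝ)})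
    (hLp : Lp = {x | (∀ y ∈ V, ∑ j, x j * y j = 0) ∧ ∀ j, ∃ k : ℤ, x j = (k : ℝ)})
    (b : Fin m → (Fin N → ℝ))
    (hb_ind : LinearIndependent ℝ b)
    (hb_span : ∀ x, x ∈ L ↔ ∃ c : Fin m → ℤ, x = ∑ i, (c i : ℝ) • b i) :
    ∃ c : Fin (N - m) → (Fin N → ℝ),
      LinearIndependent ℝ c ∧
      (∀ x, x ∈ Lp ↔ ∃ a : Fin (N - m) → ℤ, x = ∑ i, (a i : ℝ) • c i) ∧
      Real.sqrt (Matrix.det (Matrix.of fun i j => ∑ t, c i t * c j t)) =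
        Real.sqrt (Matrix.det (Matrix.of fun i j => ∑ t, b i t * b j t)) := by
  classical
  -- m ≤ N
  have hmN : m ≤ N := by
    have h1 := hb_ind.fintype_card_le_finrank
    simpa using h1
  -- b i ∈ L
  have hbL : ∀ i, b i ∈ L := by
    intro i
    rw [hb_span]
    refine ⟨fun j => if j = i then 1 else 0, ?_⟩
    rw [Finset.sum_eq_single i] <;> simp (config := {contextual := true})
  have hbV : ∀ i, b i ∈ V := by
    intro i; have := hbL i; rw [hL] at this; exact this.1
  -- integer lift of b
  have hbint : ∀ i j, ∃ k : ℤ, b i j = (k : ℝ) := by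
    intro i; have := hbL i; rw [hL] at this; exact this.2
  choose b' hb' using hbint
  -- the cast linear map
  let castLM : (Fin N → ℤ) →ₗ[ℤ] (Fin N → ℝ) :=
    { toFun := fun x j => (x j : ℝ)
      map_add' := by intro x y; funext j; simp
      map_smul' := by
        intro k x; funext j
        simp [Pi.smul_apply, zsmul_eq_mul] }
  have castLM_apply : ∀ (x : Fin N → ℤ) j, castLM x j = (x j : ℝ) := fun _ _ => rfl
  have cast_inj : Function.Injective castLM := by
    intro x y h
    funext j
    have h2 : ((x j : ℤ) : ℝ) = ((y j : ℤ) : ℝ) := congrFun h j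
    exact_mod_cast h2
  -- the saturated lattice
  set Lsat : Submodule ℤ (Fin N → ℤ) := (V.restrictScalars ℤ).comap castLM with hLsatdef
  have memLsat : ∀ x : Fin N → ℤ, x ∈ Lsat ↔ castLM x ∈ V := fun _ => Iff.rfl
  have b'Lsat : ∀ i, b' i ∈ Lsat := by
    intro i
    rw [memLsat]
    have : castLM (b' i) = b i := by funext j; rw [castLM_apply, ← hb']
    rw [this]; exact hbV i
  have castb' : ∀ i, castLM (b' i) = b i := by
    intro i; funext j; rw [castLM_apply, ← hb']
  -- span characterization of Lsat
  have hLsat_span : ∀ x : Fin N → ℤ, x ∈ Lsat ↔ ∃ c : Fin m → ℤ, x = ∑ i, c i • b' i := by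
    intro x
    constructor
    · intro hx
      have hxL : castLM x ∈ L := by
        rw [hL]; exact ⟨hx, fun j => ⟨x j, rfl⟩⟩
      obtain ⟨c, hc⟩ := (hb_span _).1 hxL
      refine ⟨c, ?_⟩
      apply cast_inj
      rw [hc, map_sum]
      congr 1; funext i
      rw [map_zsmul, castb']
      simp [zsmul_eq_mul]
      funext j; simp [Pi.smul_apply, smul_eq_mul]
    · rintro ⟨c, rfl⟩
      rw [memLsat, map_sum]
      apply Submodule.sum_mem
      intro i _
      rw [map_zsmul, castb']
      exact Submodule.smul_of_tower_mem _ _ (hbV i)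
  -- ℤ-linear independence of b'
  have hb_indZ : LinearIndependent ℤ b := by
    apply hb_ind.restrict_scalars
    intro p q h
    simpa using h
  have hb'_ind : LinearIndependent ℤ b' := by
    apply LinearIndependent.of_comp castLM
    have : castLM ∘ b' = b := by funext i; exact castb' i
    rw [this]; exact hb_indZ
  -- basis of Lsat
  let bfam : Fin m → Lsat := fun i => ⟨b' i, b'Lsat i⟩
  have bfam_ind : LinearIndependent ℤ bfam := by
    apply LinearIndependent.of_comp (Lsat.subtype)
    have : Lsat.subtype ∘ bfam = b' := rfl
    rw [this]; exact hb'_ind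
  have bfam_span : ⊤ ≤ Submodule.span ℤ (Set.range bfam) := by
    rintro ⟨x, hx⟩ -
    obtain ⟨c, rfl⟩ := (hLsat_span x).1 hx
    have : (⟨∑ i, c i • b' i, hx⟩ : Lsat) = ∑ i, c i • bfam i := by
      apply Subtype.ext
      simp [bfam]
    rw [this]
    exact Submodule.sum_mem _ fun i _ =>
      Submodule.smul_mem _ _ (Submodule.subset_span ⟨i, rfl⟩)
  let bL : Module.Basis (Fin m) ℤ Lsat := Module.Basis.mk bfam_ind bfam_span
  -- torsion-free quotient
  haveI : NoZeroSMulDivisors ℤ ((Fin N → ℤ) ⧸ Lsat) := by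
    constructor
    intro k x h
    by_cases hk : k = 0
    · left; exact hk
    right
    obtain ⟨y, rfl⟩ := Submodule.Quotient.mk_surjective _ x
    rw [← Submodule.Quotient.mk_smul, Submodule.Quotient.mk_eq_zero] at h
    rw [Submodule.Quotient.mk_eq_zero]
    rw [memLsat] at h ⊢
    rw [map_zsmul] at h
    have h2 : ((k : ℝ)⁻¹ • (k • castLM y)) ∈ V := Submodule.smul_mem _ _ h
    have h3 : (k : ℝ)⁻¹ • (k • castLM y) = castLM y := by
      rw [← Int.cast_smul_eq_zsmul ℝ, smul_smul, inv_mul_cancel₀ (by exact_mod_cast hk), one_smul]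
    rwa [h3] at h2
  haveI : Module.Free ℤ ((Fin N → ℤ) ⧸ Lsat) := Module.free_of_finite_type_torsion_free'
  -- splitting
  obtain ⟨s, hs⟩ := Module.projective_lifting_property Lsat.mkQ LinearMap.id
    (Submodule.mkQ_surjective Lsat)
  have hs' : ∀ q, Lsat.mkQ (s q) = q := fun q => LinearMap.congr_fun hs q
  have s_inj : Function.Injective s := by
    intro p q h
    have := hs' p; rw [h, hs' q] at this; exact this.symm
  set K : Submodule ℤ (Fin N → ℤ) := LinearMap.range s with hKdef
  have hcompl : IsCompl Lsat K := by
    refine ⟨?_, ?_⟩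
    · rw [Submodule.disjoint_def]
      rintro x hx ⟨q, rfl⟩
      have h1 : Lsat.mkQ (s q) = 0 := by
        rw [Submodule.mkQ_apply, Submodule.Quotient.mk_eq_zero]; exact hx
      rw [hs'] at h1
      rw [h1, map_zero]
    · rw [codisjoint_iff, eq_top_iff]
      intro x _
      have hx : x = (x - s (Lsat.mkQ x)) + s (Lsat.mkQ x) := by abel
      rw [hx]
      apply Submodule.add_mem_sup
      · show x - s (Lsat.mkQ x) ∈ Lsat
        rw [← Submodule.Quotient.mk_eq_zero, ← Submodule.mkQ_apply, map_sub, hs', sub_self]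
      · exact ⟨Lsat.mkQ x, rfl⟩
  -- basis of K
  let κ := Module.Free.ChooseBasisIndex ℤ ((Fin N → ℤ) ⧸ Lsat)
  let bQ : Module.Basis κ ℤ ((Fin N → ℤ) ⧸ Lsat) := Module.Free.chooseBasis ℤ _
  let eK : ((Fin N → ℤ) ⧸ Lsat) ≃ₗ[ℤ] K := LinearEquiv.ofInjective s s_inj
  let bK : Module.Basis κ ℤ K := bQ.map eK
  -- full basis
  let B0 : Module.Basis (Fin m ⊕ κ) ℤ (Fin N → ℤ) :=
    (bL.prod bK).map (Submodule.prodEquivOfIsCompl _ _ hcompl)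
  have hcard : m + Fintype.card κ = N := by
    have h1 := Module.finrank_eq_card_basis B0
    have h2 := Module.finrank_eq_card_basis (Pi.basisFun ℤ (Fin N))
    rw [h2] at h1
    simpa using h1.symm
  let eκ : κ ≃ Fin (N - m) := Fintype.equivFinOfCardEq (by omega)
  let 𝔅 : Module.Basis (Fin m ⊕ Fin (N - m)) ℤ (Fin N → ℤ) :=
    B0.reindex (Equiv.sumCongr (Equiv.refl _) eκ)
  have h𝔅l : ∀ i, (𝔅 (Sum.inl i) : Fin N → ℤ) = b' i := by
    intro i
    show (B0.reindex ((Equiv.refl (Fin m)).sumCongr eκ)) (Sum.inl i) = b' i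
    rw [Module.Basis.reindex_apply]
    have h0 : ((Equiv.refl (Fin m)).sumCongr eκ).symm (Sum.inl i) = Sum.inl i := rfl
    rw [h0]
    show (Submodule.prodEquivOfIsCompl _ _ hcompl) ((bL.prod bK) (Sum.inl i)) = b' i
    rw [Module.Basis.prod_apply]
    simp [Submodule.coe_prodEquivOfIsCompl', bL, Module.Basis.mk_apply, bfam]
  -- the index equivalence
  let e : (Fin m ⊕ Fin (N - m)) ≃ Fin N := finSumFinEquiv.trans (finCongr (by omega))
  -- the unimodular matrix
  let U : Matrix (Fin m ⊕ Fin (N - m)) (Fin m ⊕ Fin (N - m)) ℤ :=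
    Matrix.of fun s t => 𝔅 s (e t)
  have hUdet : IsUnit U.det := by
    let std : Module.Basis (Fin m ⊕ Fin (N - m)) ℤ (Fin N → ℤ) := (Pi.basisFun ℤ (Fin N)).reindex e.symm
    have hstd : std.toMatrix ⇑𝔅 = U.transpose := by
      ext s t
      rw [Module.Basis.toMatrix_apply]
      show (Pi.basisFun ℤ (Fin N)).repr (𝔅 t) (e.symm.symm s) = U t s
      simp [Pi.basisFun_repr, U]
    haveI := std.invertibleToMatrix 𝔅
    have h2 : IsUnit (std.toMatrix ⇑𝔅).det := Matrix.isUnit_det_of_invertible _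
    rwa [hstd, Matrix.det_transpose] at h2
  set W : Matrix (Fin m ⊕ Fin (N - m)) (Fin m ⊕ Fin (N - m)) ℤ := U⁻¹ with hWdef
  have hUW : U * W = 1 := Matrix.mul_nonsing_inv U hUdet
  have hWU : W * U = 1 := Matrix.nonsing_inv_mul U hUdet
  -- real versions
  let f : ℤ →+* ℝ := Int.castRingHom ℝ
  let Uℝ : Matrix _ _ ℝ := U.map f
  let Wℝ : Matrix _ _ ℝ := W.map f
  have hUWℝ : Uℝ * Wℝ = 1 := by
    show U.map f * W.map f = 1
    rw [← Matrix.map_mul, hUW]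
    simp
  have hWUℝ : Wℝ * Uℝ = 1 := by
    show W.map f * U.map f = 1
    rw [← Matrix.map_mul, hWU]
    simp
  -- coordinates of b
  have hUb : ∀ i t, Uℝ (Sum.inl i) (e.symm t) = b i t := by
    intro i t
    show ((U (Sum.inl i) (e.symm t) : ℤ) : ℝ) = b i t
    have : U (Sum.inl i) (e.symm t) = b' i t := by
      show 𝔅 (Sum.inl i) (e (e.symm t)) = b' i t
      rw [Equiv.apply_symm_apply, h𝔅l]
    rw [this, ← hb']
  -- definition of c
  refine ⟨fun j t => Wℝ (e.symm t) (Sum.inr j), ?_, ?_, ?_⟩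
  · -- linear independence
    rw [Fintype.linearIndependent_iff]
    intro g hg j
    have hW0 : Wℝ.mulVec (Sum.elim (0 : Fin m → ℝ) g) = 0 := by
      funext s
      have h1 := congrFun hg (e s)
      simp only [Finset.sum_apply, Pi.smul_apply, smul_eq_mul, Pi.zero_apply,
        Equiv.symm_apply_apply] at h1
      have h2 : Wℝ.mulVec (Sum.elim (0 : Fin m → ℝ) g) s
          = ∑ j', Wℝ s (Sum.inr j') * g j' := by
        rw [Matrix.mulVec, dotProduct, Fintype.sum_sum_type]
        simp
      rw [h2, Pi.zero_apply, ← h1]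
      exact Finset.sum_congr rfl fun j' _ => mul_comm _ _
    have : Sum.elim (0 : Fin m → ℝ) g = 0 := by
      have h2 : Uℝ.mulVec (Wℝ.mulVec (Sum.elim (0 : Fin m → ℝ) g)) =
          Sum.elim (0 : Fin m → ℝ) g := by
        rw [Matrix.mulVec_mulVec, hUWℝ, Matrix.one_mulVec]
      rw [hW0, Matrix.mulVec_zero] at h2
      exact h2.symm
    exact congrFun this (Sum.inr j)
  · -- span characterization
    have hV : V = Submodule.span ℝ (Set.range b) := by
      have hle : Submodule.span ℝ (Set.range b) ≤ V := by
        rw [Submodule.span_le]; rintro y ⟨i, rfl⟩; exact hbV i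
      have hfr : Module.finrank ℝ (Submodule.span ℝ (Set.range b)) = m := by
        rw [finrank_span_eq_card hb_ind]; simp
      exact (Submodule.eq_of_le_of_finrank_le hle (le_of_eq (by rw [hfr, ← hm]))).symm
    have horth : ∀ (k : Fin m) (j : Fin (N - m)),
        ∑ t, b k t * Wℝ (e.symm t) (Sum.inr j) = 0 := by
      intro k j
      have h1 : ∑ s', Uℝ (Sum.inl k) s' * Wℝ s' (Sum.inr j) = 0 := by
        have h2 : (Uℝ * Wℝ) (Sum.inl k) (Sum.inr j)
            = (1 : Matrix (Fin m ⊕ Fin (N - m)) (Fin m ⊕ Fin (N - m)) ℝ) (Sum.inl k) (Sum.inr j) := by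
          rw [hUWℝ]
        rw [Matrix.mul_apply] at h2
        rw [h2, Matrix.one_apply_ne (by simp)]
      calc ∑ t, b k t * Wℝ (e.symm t) (Sum.inr j)
          = ∑ t, Uℝ (Sum.inl k) (e.symm t) * Wℝ (e.symm t) (Sum.inr j) :=
            Finset.sum_congr rfl fun t _ => by rw [hUb]
        _ = ∑ s', Uℝ (Sum.inl k) s' * Wℝ s' (Sum.inr j) :=
            Equiv.sum_comp e.symm (fun s' => Uℝ (Sum.inl k) s' * Wℝ s' (Sum.inr j))
        _ = 0 := h1
    intro x
    rw [hLp]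
    constructor
    · rintro ⟨hxV, hxint⟩
      choose x' hx' using hxint
      have hxb : ∀ k, ∑ t, x t * b k t = 0 := fun k => hxV (b k) (hbV k)
      set z : (Fin m ⊕ Fin (N - m)) → ℤ := fun s' => x' (e s') with hzdef
      have hUz : ∀ k, (U.mulVec z) (Sum.inl k) = 0 := by
        intro k
        have hcast : (((U.mulVec z) (Sum.inl k) : ℤ) : ℝ) = 0 := by
          rw [Matrix.mulVec, dotProduct]
          push_cast
          calc ∑ s', ((U (Sum.inl k) s' : ℤ) : ℝ) * ((z s' : ℤ) : ℝ)
              = ∑ s', x (e s') * b k (e s') := by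
                refine Finset.sum_congr rfl fun s' _ => ?_
                have h1 : ((U (Sum.inl k) s' : ℤ) : ℝ) = b k (e s') := by
                  have h2 := hUb k (e s')
                  rwa [Equiv.symm_apply_apply] at h2
                have h3 : ((z s' : ℤ) : ℝ) = x (e s') := (hx' (e s')).symm
                rw [h1, h3]; ring
            _ = ∑ t, x t * b k t := Equiv.sum_comp e (fun t => x t * b k t)
            _ = 0 := hxb k
        exact_mod_cast hcast
      refine ⟨fun j => (U.mulVec z) (Sum.inr j), ?_⟩
      funext t
      have hz : z = W.mulVec (U.mulVec z) := by
        rw [Matrix.mulVec_mulVec, hWU, Matrix.one_mulVec]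
      have h5 : z (e.symm t) = ∑ j, W (e.symm t) (Sum.inr j) * (U.mulVec z) (Sum.inr j) := by
        have h6 := congrFun hz (e.symm t)
        rw [h6, Matrix.mulVec, dotProduct, Fintype.sum_sum_type]
        simp [hUz]
      have h4 : x t = ((z (e.symm t) : ℤ) : ℝ) := by
        rw [hzdef]
        simp only [Equiv.apply_symm_apply]
        exact hx' t
      rw [h4, h5]
      push_cast
      simp only [Finset.sum_apply, Pi.smul_apply, smul_eq_mul]
      exact Finset.sum_congr rfl fun j _ => mul_comm _ _
    · rintro ⟨a, rfl⟩
      constructor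
      · intro y hy
        rw [hV] at hy
        induction hy using Submodule.span_induction with
        | mem y hy =>
          obtain ⟨k, rfl⟩ := hy
          simp only [Finset.sum_apply, Pi.smul_apply, smul_eq_mul]
          have hsw : ∀ t, (∑ i, (a i : ℝ) * Wℝ (e.symm t) (Sum.inr i)) * b k t
              = ∑ i, (a i : ℝ) * (b k t * Wℝ (e.symm t) (Sum.inr i)) := by
            intro t
            rw [Finset.sum_mul]
            exact Finset.sum_congr rfl fun i _ => by ring
          simp_rw [hsw]
          rw [Finset.sum_comm]
          simp_rw [← Finset.mul_sum]
          simp [horth]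
        | zero => simp
        | add u v hu hv hu' hv' =>
          simp only [Pi.add_apply, mul_add, Finset.sum_add_distrib, hu', hv', add_zero]
        | smul r u hu hu' =>
          simp only [Pi.smul_apply, smul_eq_mul]
          have : ∑ t, (∑ i, (a i : ℝ) • (fun t' => Wℝ (e.symm t') (Sum.inr i)) : Fin N → ℝ) t * (r * u t)
              = r * ∑ t, (∑ i, (a i : ℝ) • (fun t' => Wℝ (e.symm t') (Sum.inr i)) : Fin N → ℝ) t * u t := by
            rw [Finset.mul_sum]
            exact Finset.sum_congr rfl fun t _ => by ring
          rw [this, hu', mul_zero]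
      · intro j
        refine ⟨∑ i, a i * W (e.symm j) (Sum.inr i), ?_⟩
        simp only [Finset.sum_apply, Pi.smul_apply, smul_eq_mul]
        push_cast
        exact Finset.sum_congr rfl fun i _ => rfl
  · -- Gram determinant equality
    let S := Fin m ⊕ Fin (N - m)
    let Bm : Matrix (Fin m) S ℝ := Matrix.of fun i s' => Uℝ (Sum.inl i) s'
    let Qm : Matrix S (Fin (N - m)) ℝ := Matrix.of fun s' j => Wℝ s' (Sum.inr j)
    let M : Matrix S S ℝ := Matrix.fromCols Bm.transpose Qm
    let Gb : Matrix (Fin m) (Fin m) ℝ := Bm * Bm.transpose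
    let Gc : Matrix (Fin (N - m)) (Fin (N - m)) ℝ := Qm.transpose * Qm
    let X : Matrix (Fin (N - m)) (Fin m) ℝ :=
      Matrix.of fun i j => ∑ s', Uℝ (Sum.inr i) s' * Uℝ (Sum.inl j) s'
    have hUWe : ∀ s' t', ∑ u, Uℝ s' u * Wℝ u t' = (1 : Matrix S S ℝ) s' t' := by
      intro s' t'
      rw [← Matrix.mul_apply, hUWℝ]
    have hBQ : ∀ i j, ∑ s', Uℝ (Sum.inl i) s' * Wℝ s' (Sum.inr j) = 0 := by
      intro i j
      rw [hUWe, Matrix.one_apply_ne (by simp)]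
    have h1 : Uℝ * M = Matrix.fromBlocks Gb 0 X 1 := by
      ext s' t'
      rw [Matrix.mul_apply]
      cases s' with
      | inl i =>
        cases t' with
        | inl j =>
          show ∑ u, Uℝ (Sum.inl i) u * M u (Sum.inl j) = (Bm * Bm.transpose) i j
          rw [Matrix.mul_apply]
          exact Finset.sum_congr rfl fun u _ => rfl
        | inr j =>
          show ∑ u, Uℝ (Sum.inl i) u * M u (Sum.inr j) = (0 : Matrix (Fin m) (Fin (N - m)) ℝ) i j
          rw [Matrix.zero_apply, ← hBQ i j]
          exact Finset.sum_congr rfl fun u _ => rfl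
      | inr i =>
        cases t' with
        | inl j =>
          show ∑ u, Uℝ (Sum.inr i) u * M u (Sum.inl j) = X i j
          exact Finset.sum_congr rfl fun u _ => rfl
        | inr j =>
          show ∑ u, Uℝ (Sum.inr i) u * M u (Sum.inr j) = (1 : Matrix (Fin (N - m)) (Fin (N - m)) ℝ) i j
          have h2 : ∑ u, Uℝ (Sum.inr i) u * M u (Sum.inr j)
              = ∑ u, Uℝ (Sum.inr i) u * Wℝ u (Sum.inr j) :=
            Finset.sum_congr rfl fun u _ => rfl
          rw [h2, hUWe]
          by_cases hij : i = j
          · subst hij; rw [Matrix.one_apply_eq, Matrix.one_apply_eq]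
          · rw [Matrix.one_apply_ne (by simp [hij]), Matrix.one_apply_ne hij]
    have h2 : M.transpose * M = Matrix.fromBlocks Gb 0 0 Gc := by
      ext s' t'
      rw [Matrix.mul_apply]
      cases s' with
      | inl i =>
        cases t' with
        | inl j =>
          show ∑ u, M.transpose (Sum.inl i) u * M u (Sum.inl j) = (Bm * Bm.transpose) i j
          rw [Matrix.mul_apply]
          exact Finset.sum_congr rfl fun u _ => rfl
        | inr j =>
          show ∑ u, M.transpose (Sum.inl i) u * M u (Sum.inr j)
              = (0 : Matrix (Fin m) (Fin (N - m)) ℝ) i j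
          rw [Matrix.zero_apply, ← hBQ i j]
          exact Finset.sum_congr rfl fun u _ => rfl
      | inr i =>
        cases t' with
        | inl j =>
          show ∑ u, M.transpose (Sum.inr i) u * M u (Sum.inl j)
              = (0 : Matrix (Fin (N - m)) (Fin m) ℝ) i j
          rw [Matrix.zero_apply, ← hBQ j i]
          exact Finset.sum_congr rfl fun u _ => mul_comm _ _
        | inr j =>
          show ∑ u, M.transpose (Sum.inr i) u * M u (Sum.inr j) = (Qm.transpose * Qm) i j
          rw [Matrix.mul_apply]
          exact Finset.sum_congr rfl fun u _ => rfl
    have hd1 : Uℝ.det * M.det = Gb.det := by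
      rw [← Matrix.det_mul, h1, Matrix.det_fromBlocks_zero₁₂, Matrix.det_one, mul_one]
    have hd2 : M.det * M.det = Gb.det * Gc.det := by
      have h3 := congrArg Matrix.det h2
      rwa [Matrix.det_mul, Matrix.det_transpose, Matrix.det_fromBlocks_zero₁₂] at h3
    have hdU : Uℝ.det * Uℝ.det = 1 := by
      have h3 : Uℝ.det = ((U.det : ℤ) : ℝ) := by
        show (U.map f).det = _
        rw [← RingHom.mapMatrix_apply, ← RingHom.map_det]
        rfl
      rcases Int.isUnit_iff.1 hUdet with h | h <;> rw [h3, h] <;> norm_num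
    have hGb0 : Gb.det ≠ 0 := by
      intro h0
      obtain ⟨v, hv0, hv⟩ := Matrix.exists_mulVec_eq_zero_iff.2 h0
      have hw : Matrix.vecMul v Bm = 0 := by
        have h6 : Gb.mulVec v = Bm.mulVec (Bm.transpose.mulVec v) := by
          rw [Matrix.mulVec_mulVec]
        have h7 : dotProduct v (Gb.mulVec v) = 0 := by
          rw [hv, dotProduct_zero]
        rw [h6, Matrix.dotProduct_mulVec, Matrix.mulVec_transpose] at h7
        exact dotProduct_self_eq_zero.1 h7
      have hzero : ∑ i, v i • b i = 0 := by
        funext t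
        have h8 := congrFun hw (e.symm t)
        simp only [Finset.sum_apply, Pi.smul_apply, smul_eq_mul, Pi.zero_apply]
        rw [Matrix.vecMul, dotProduct, Pi.zero_apply] at h8
        rw [← h8]
        exact Finset.sum_congr rfl fun i _ => by rw [← hUb i t]; rfl
      have := Fintype.linearIndependent_iff.1 hb_ind v hzero
      exact hv0 (funext this)
    have hGcGb : Gc.det = Gb.det := by
      have h4 : Gb.det * Gc.det = Gb.det * Gb.det := by
        calc Gb.det * Gc.det = M.det * M.det := hd2.symm
          _ = (Uℝ.det * Uℝ.det) * (M.det * M.det) := by rw [hdU, one_mul]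
          _ = (Uℝ.det * M.det) * (Uℝ.det * M.det) := by ring
          _ = Gb.det * Gb.det := by rw [hd1]
      exact mul_left_cancel₀ hGb0 h4
    have e1 : (Matrix.of fun i j => ∑ t, Wℝ (e.symm t) (Sum.inr i) * Wℝ (e.symm t) (Sum.inr j)) = Gc := by
      ext i j
      show ∑ t, Wℝ (e.symm t) (Sum.inr i) * Wℝ (e.symm t) (Sum.inr j) = (Qm.transpose * Qm) i j
      rw [Matrix.mul_apply]
      exact Equiv.sum_comp e.symm (fun s' => Wℝ s' (Sum.inr i) * Wℝ s' (Sum.inr j))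
    have e2 : (Matrix.of fun i j => ∑ t, b i t * b j t) = Gb := by
      ext i j
      show ∑ t, b i t * b j t = (Bm * Bm.transpose) i j
      rw [Matrix.mul_apply]
      calc ∑ t, b i t * b j t
          = ∑ t, Uℝ (Sum.inl i) (e.symm t) * Uℝ (Sum.inl j) (e.symm t) :=
            Finset.sum_congr rfl fun t _ => by rw [hUb, hUb]
        _ = ∑ s', Uℝ (Sum.inl i) s' * Uℝ (Sum.inl j) s' :=
            Equiv.sum_comp e.symm (fun s' => Uℝ (Sum.inl i) s' * Uℝ (Sum.inl j) s')
        _ = ∑ s', Bm i s' * Bm.transpose s' j := Finset.sum_congr rfl fun u _ => rfl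
    rw [e1, e2, hGcGb]
end

section
/- Let d ≥ 3 be an integer and let Σ_d = {x ∈ [0,1]^d : Σ_{i=1}^d x_i = 1}. The function φ_v(x) = Σ_{i=1}^d ((1 − x_i) ln(1 − x_i) − x_i ln(x_i)) (with the convention 0·ln 0 = 0) attains its maximum on Σ_d at the unique point (1/d, 1/d, …, 1/d), and the maximum value is (d−1) ln(d−1) − (d−2) ln d = ln((d−1)^{d−1}/d^{d−2}). -/
open Real Set

noncomputable def gfun (t : ℝ) : ℝ := (1 - t) * Real.log (1 - t) - t * Real.log t
noncomputable def gder (t : ℝ) : ℝ := -Real.log (1 - t) - Real.log t - 2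

lemma gfun_cont : Continuous gfun := by
  have h := Real.continuous_mul_log
  exact (h.comp (continuous_const.sub continuous_id)).sub h

lemma gfun_hasDeriv {t : ℝ} (h0 : 0 < t) (h1 : t < 1) : HasDerivAt gfun (gder t) t := by
  have h1' : (1:ℝ) - t ≠ 0 := by intro h; rw [sub_eq_zero] at h; exact absurd h.symm (ne_of_lt h1)
  have ha : HasDerivAt (fun s : ℝ => s * Real.log s) (Real.log t + 1) t :=
    Real.hasDerivAt_mul_log (ne_of_gt h0)
  have hb : HasDerivAt (fun s : ℝ => (1 - s)) (-1 : ℝ) t := by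
    simpa using (hasDerivAt_id t).const_sub 1
  have hc : HasDerivAt (fun s : ℝ => (1 - s) * Real.log (1 - s))
      ((Real.log (1 - t) + 1) * (-1)) t := by
    have := (Real.hasDerivAt_mul_log h1').comp t hb
    simpa [Function.comp_def] using this
  have := hc.sub ha
  exact this.congr_deriv (by unfold gder; ring)

lemma tangent_lt {c t : ℝ} (hc : c ∈ Set.Ioo (0:ℝ) (1/2)) (ht : t ∈ Set.Icc (0:ℝ) (1/2))
    (hne : t ≠ c) : gfun t < gfun c + gder c * (t - c) := by
  obtain ⟨hc0, hc2⟩ := hc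
  obtain ⟨ht0, ht2⟩ := ht
  set ψ : ℝ → ℝ := fun s => gfun c + gder c * (s - c) - gfun s with hψdef
  have hψc : ψ c = 0 := by simp [hψdef]
  have hcont : Continuous ψ := by
    apply Continuous.sub _ gfun_cont
    exact continuous_const.add (continuous_const.mul ((continuous_id).sub continuous_const))
  have hder : ∀ s : ℝ, 0 < s → s < 1 → HasDerivAt ψ (gder c - gder s) s := by
    intro s hs0 hs1
    have h1 : HasDerivAt (fun u : ℝ => gfun c + gder c * (u - c)) (gder c) s := by
      simpa using (((hasDerivAt_id s).sub_const c).const_mul (gder c)).const_add (gfun c)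
    exact h1.sub (gfun_hasDeriv hs0 hs1)
  have hgd : ∀ s : ℝ, 0 < s → s < 1 → gder c - gder s
      = Real.log (s * (1 - s)) - Real.log (c * (1 - c)) := by
    intro s hs0 hs1
    unfold gder
    rw [Real.log_mul (ne_of_gt hs0) (by linarith), Real.log_mul (ne_of_gt hc0) (by linarith)]
    ring
  have key : 0 < ψ t := by
    rcases lt_or_gt_of_ne hne with h | h
    · have anti : StrictAntiOn ψ (Set.Icc 0 c) := by
        apply strictAntiOn_of_deriv_neg (convex_Icc _ _) hcont.continuousOn
        intro s hs
        rw [interior_Icc] at hs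
        obtain ⟨hs0, hsc⟩ := hs
        have hs1 : s < 1 := by linarith
        rw [(hder s hs0 hs1).deriv, hgd s hs0 hs1]
        have harg : s * (1 - s) < c * (1 - c) := by nlinarith
        have := Real.log_lt_log (by nlinarith) harg
        linarith
      have := anti ⟨ht0, le_of_lt h⟩ ⟨le_of_lt hc0, le_refl c⟩ h
      linarith [hψc ▸ this]
    · have mono : StrictMonoOn ψ (Set.Icc c (1/2)) := by
        apply strictMonoOn_of_deriv_pos (convex_Icc _ _) hcont.continuousOn
        intro s hs
        rw [interior_Icc] at hs
        obtain ⟨hsc, hs2⟩ := hs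
        have hs0 : 0 < s := by linarith
        have hs1 : s < 1 := by linarith
        rw [(hder s hs0 hs1).deriv, hgd s hs0 hs1]
        have harg : c * (1 - c) < s * (1 - s) := by nlinarith
        have := Real.log_lt_log (by nlinarith) harg
        linarith
      have := mono ⟨le_refl c, le_of_lt hc2⟩ ⟨by linarith, ht2⟩ h
      linarith [hψc ▸ this]
  simpa [hψdef] using key

lemma tangent_le {c t : ℝ} (hc : c ∈ Set.Ioo (0:ℝ) (1/2)) (ht : t ∈ Set.Icc (0:ℝ) (1/2)) :
    gfun t ≤ gfun c + gder c * (t - c) := by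
  rcases eq_or_ne t c with h | h
  · subst h; simp
  · exact le_of_lt (tangent_lt hc ht h)

noncomputable def Gfun (e r : ℝ) : ℝ := e * gfun (r / e) - gfun r

lemma Gfun_mono {e : ℝ} (he : 2 ≤ e) : StrictMonoOn (Gfun e) (Set.Icc (0:ℝ) (1/2)) := by
  have he0 : (0:ℝ) < e := by linarith
  apply strictMonoOn_of_deriv_pos (convex_Icc _ _)
  · exact ((continuous_const.mul (gfun_cont.comp (continuous_id.div_const e))).sub
      gfun_cont).continuousOn
  · intro r hr
    rw [interior_Icc] at hr
    obtain ⟨hr0, hr2⟩ := hr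
    have hre0 : 0 < r / e := div_pos hr0 he0
    have hre1 : r / e < 1 := by rw [div_lt_one he0]; linarith
    have hinner : HasDerivAt (fun s : ℝ => gfun (s / e)) (gder (r/e) * (1/e)) r := by
      have := (gfun_hasDeriv hre0 hre1).comp r ((hasDerivAt_id r).div_const e)
      simpa [Function.comp_def, one_div] using this
    have hd : HasDerivAt (Gfun e) (e * (gder (r/e) * (1/e)) - gder r) r :=
      (hinner.const_mul e).sub (gfun_hasDeriv hr0 (by linarith))
    rw [hd.deriv]
    have hsimp : e * (gder (r/e) * (1/e)) = gder (r/e) := by field_simp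
    rw [hsimp]
    have her : 0 < e - r := by linarith
    have h1 : Real.log (1 - r/e) = Real.log (e - r) - Real.log e := by
      rw [show (1:ℝ) - r/e = (e - r)/e by field_simp, Real.log_div (ne_of_gt her) (ne_of_gt he0)]
    have h2 : Real.log (r/e) = Real.log r - Real.log e :=
      Real.log_div (ne_of_gt hr0) (ne_of_gt he0)
    have hlt : Real.log (e - r) < Real.log (e^2 * (1 - r)) := by
      apply Real.log_lt_log her
      nlinarith
    have h3 : Real.log (e^2 * (1 - r)) = 2 * Real.log e + Real.log (1 - r) := by
      rw [Real.log_mul (by positivity) (by linarith), Real.log_pow]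
      push_cast; ring
    unfold gder
    rw [h1, h2]
    linarith

noncomputable def Phi (y : ℝ) : ℝ :=
  (2*y - 1) * Real.log y + (y - 1) * Real.log 2
    - (y - 1/2) * Real.log (2*y - 1) - (y - 1) * Real.log (y + 1)

lemma Phi_hasDeriv {y : ℝ} (hy : 1 < y) :
    HasDerivAt Phi
      ((2 * Real.log y + (2*y - 1) / y + Real.log 2)
        - (Real.log (2*y - 1) + 1) - (Real.log (y + 1) + (y - 1)/(y + 1))) y := by
  have hy0 : (0:ℝ) < y := by linarith
  have h2y : (0:ℝ) < 2*y - 1 := by linarith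
  have hy1 : (0:ℝ) < y + 1 := by linarith
  have t1 : HasDerivAt (fun u : ℝ => (2*u - 1) * Real.log u)
      (2 * Real.log y + (2*y - 1) * (1/y)) y := by
    have ha : HasDerivAt (fun u : ℝ => 2*u - 1) 2 y := by
      simpa using ((hasDerivAt_id y).const_mul 2).sub_const 1
    have hb : HasDerivAt Real.log (1/y) y := by
      simpa [one_div] using Real.hasDerivAt_log (ne_of_gt hy0)
    simpa [Pi.mul_def] using ha.mul hb
  have t2 : HasDerivAt (fun u : ℝ => (u - 1) * Real.log 2) (Real.log 2) y := by
    simpa using ((hasDerivAt_id y).sub_const 1).mul_const (Real.log 2)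
  have hlog3 : HasDerivAt (fun u : ℝ => Real.log (2*u - 1)) (1/(2*y - 1) * 2) y := by
    have ha : HasDerivAt (fun u : ℝ => 2*u - 1) 2 y := by
      simpa using ((hasDerivAt_id y).const_mul 2).sub_const 1
    have hb : HasDerivAt Real.log (1/(2*y-1)) (2*y-1) := by
      simpa [one_div] using Real.hasDerivAt_log (ne_of_gt h2y)
    exact hb.comp y ha
  have t3 : HasDerivAt (fun u : ℝ => (u - 1/2) * Real.log (2*u - 1))
      (1 * Real.log (2*y - 1) + (y - 1/2) * (1/(2*y - 1) * 2)) y :=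
    ((hasDerivAt_id y).sub_const (1/2)).mul hlog3
  have hlog4 : HasDerivAt (fun u : ℝ => Real.log (u + 1)) (1/(y + 1)) y := by
    have ha : HasDerivAt (fun u : ℝ => u + 1) 1 y := (hasDerivAt_id y).add_const 1
    have hb : HasDerivAt Real.log (1/(y+1)) (y+1) := by
      simpa [one_div] using Real.hasDerivAt_log (ne_of_gt hy1)
    simpa [Function.comp_def] using hb.comp y ha
  have t4 : HasDerivAt (fun u : ℝ => (u - 1) * Real.log (u + 1))
      (1 * Real.log (y + 1) + (y - 1) * (1/(y + 1))) y :=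
    ((hasDerivAt_id y).sub_const 1).mul hlog4
  have := ((t1.add t2).sub t3).sub t4
  exact this.congr_deriv (by field_simp)

lemma Phi_deriv_pos {y : ℝ} (hy : 1 < y) :
    0 < (2 * Real.log y + (2*y - 1) / y + Real.log 2)
        - (Real.log (2*y - 1) + 1) - (Real.log (y + 1) + (y - 1)/(y + 1)) := by
  have hy0 : (0:ℝ) < y := by linarith
  have h2y : (0:ℝ) < 2*y - 1 := by linarith
  have hy1 : (0:ℝ) < y + 1 := by linarith
  have hA : Real.log (2*y - 1) + Real.log (y + 1) - (2 * Real.log y + Real.log 2)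
      = Real.log (((2*y - 1) * (y + 1)) / (2 * y^2)) := by
    rw [Real.log_div (by positivity) (by positivity), Real.log_mul (ne_of_gt h2y) (ne_of_gt hy1),
      Real.log_mul (by norm_num) (by positivity), Real.log_pow]
    push_cast; ring
  have hB : Real.log (((2*y - 1) * (y + 1)) / (2 * y^2)) ≤ ((2*y - 1) * (y + 1)) / (2 * y^2) - 1 :=
    Real.log_le_sub_one_of_pos (by positivity)
  have hC : ((2*y - 1) * (y + 1)) / (2 * y^2) - 1 = (y - 1) / (2 * y^2) := by
    field_simp; ring
  have hD : (2*y - 1) / y - 1 - (y - 1)/(y + 1) = (y - 1) / (y * (y + 1)) := by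
    field_simp; ring
  have hE : (y - 1) / (2 * y^2) < (y - 1) / (y * (y + 1)) := by
    apply div_lt_div_of_pos_left (by linarith) (by positivity)
    nlinarith
  linarith

lemma Phi_mono : StrictMonoOn Phi (Set.Ici (2:ℝ)) := by
  apply strictMonoOn_of_deriv_pos (convex_Ici _)
  · intro y hy
    have hy2 : (2:ℝ) ≤ y := hy
    have hy0 : y ≠ 0 := by intro h; rw [h] at hy2; norm_num at hy2
    have h2y : 2*y - 1 ≠ 0 := by intro h; nlinarith [h]
    have hy1 : y + 1 ≠ 0 := by intro h; nlinarith [h]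
    have hf2 : ContinuousAt (fun u : ℝ => 2*u - 1) y := by fun_prop
    have hf4 : ContinuousAt (fun u : ℝ => u + 1) y := by fun_prop
    have hc1 : ContinuousAt (fun u : ℝ => Real.log u) y := Real.continuousAt_log hy0
    have hc2 : ContinuousAt (fun u : ℝ => Real.log (2*u - 1)) y :=
      ContinuousAt.comp (g := Real.log) (f := fun u : ℝ => 2*u - 1)
        (Real.continuousAt_log h2y) hf2
    have hc4 : ContinuousAt (fun u : ℝ => Real.log (u + 1)) y :=
      ContinuousAt.comp (g := Real.log) (f := fun u : ℝ => u + 1)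
        (Real.continuousAt_log hy1) hf4
    apply ContinuousAt.continuousWithinAt
    unfold Phi
    exact ((((by fun_prop : ContinuousAt (fun u : ℝ => 2*u - 1) y).mul hc1).add
      (by fun_prop)).sub ((by fun_prop : ContinuousAt (fun u : ℝ => u - 1/2) y).mul hc2)).sub
      ((by fun_prop : ContinuousAt (fun u : ℝ => u - 1) y).mul hc4)
  · intro y hy
    rw [interior_Ici] at hy
    have hy1 : (1:ℝ) < y := by have : (2:ℝ) < y := hy; linarith
    rw [(Phi_hasDeriv hy1).deriv]
    exact Phi_deriv_pos hy1

lemma Phi_two_pos : 0 < Phi 2 := by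
  have h1 : Real.log 243 < Real.log 256 := Real.log_lt_log (by norm_num) (by norm_num)
  rw [show (243:ℝ) = 3^5 by norm_num, show (256:ℝ) = 2^8 by norm_num,
    Real.log_pow, Real.log_pow] at h1
  push_cast at h1
  unfold Phi
  norm_num
  linarith

lemma Phi_pos {e : ℝ} (he : 2 ≤ e) : 0 < Phi e := by
  rcases eq_or_lt_of_le he with h | h
  · rw [← h]; exact Phi_two_pos
  · exact lt_trans Phi_two_pos (Phi_mono (by norm_num) (le_of_lt h) h)

lemma G_half_lt {e : ℝ} (he : 2 ≤ e) :
    Gfun e (1/2) < e * Real.log e - (e - 1) * Real.log (e + 1) := by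
  have he0 : (0:ℝ) < e := by linarith
  have h2e : (0:ℝ) < 2*e - 1 := by linarith
  have hghalf : gfun (1/2) = 0 := by norm_num [gfun]
  have key1 : Real.log (1 - (1/2)/e) = Real.log (2*e - 1) - Real.log 2 - Real.log e := by
    rw [show (1:ℝ) - (1/2)/e = (2*e - 1)/(2*e) by field_simp,
      Real.log_div (ne_of_gt h2e) (by positivity),
      Real.log_mul (by norm_num) (ne_of_gt he0)]
    ring
  have key2 : Real.log ((1/2)/e) = -(Real.log 2 + Real.log e) := by
    rw [show ((1:ℝ)/2)/e = (2*e)⁻¹ by field_simp, Real.log_inv,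
      Real.log_mul (by norm_num) (ne_of_gt he0)]
  have hPhi := Phi_pos he
  have hexp : e * Real.log e - (e - 1) * Real.log (e + 1) - Gfun e (1/2) = Phi e := by
    unfold Gfun Phi gfun
    rw [hghalf] at *
    rw [key1, key2]
    field_simp
    ring
  linarith

lemma value_eq {D : ℝ} (hD : 3 ≤ D) :
    D * gfun (1/D) = (D - 1) * Real.log (D - 1) - (D - 2) * Real.log D := by
  have hD0 : (0:ℝ) < D := by linarith
  have h1 : Real.log (1 - 1/D) = Real.log (D - 1) - Real.log D := by
    rw [show (1:ℝ) - 1/D = (D - 1)/D by field_simp,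
      Real.log_div (by linarith) (ne_of_gt hD0)]
  have h2 : Real.log (1/D) = -Real.log D := by rw [one_div, Real.log_inv]
  unfold gfun
  rw [h1, h2]
  field_simp
  ring


/-- For `d ≥ 3`, the function
`φ_v(x) = ∑ᵢ ((1 − xᵢ) ln(1 − xᵢ) − xᵢ ln xᵢ)` attains its maximum on the simplex
`Σ_d = {x ∈ [0,1]^d : ∑ xᵢ = 1}` at the unique point `(1/d,…,1/d)`, with maximum value
`(d−1) ln(d−1) − (d−2) ln d = ln((d−1)^{d−1}/d^{d−2})`. -/
theorem stmt_4 (d : ℕ) (hd : 3 ≤ d)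
    (φ : (Fin d → ℝ) → ℝ)
    (hφ : ∀ x : Fin d → ℝ,
      φ x = ∑ i, ((1 - x i) * Real.log (1 - x i) - x i * Real.log (x i))) :
    (∀ x : Fin d → ℝ, (∀ i, x i ∈ Set.Icc (0:ℝ) 1) → (∑ i, x i) = 1 →
        x ≠ (fun _ => 1 / (d:ℝ)) → φ x < φ (fun _ => 1 / (d:ℝ))) ∧
    φ (fun _ => 1 / (d:ℝ)) =
      ((d:ℝ) - 1) * Real.log ((d:ℝ) - 1) - ((d:ℝ) - 2) * Real.log (d:ℝ) ∧
    φ (fun _ => 1 / (d:ℝ)) =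
      Real.log (((d:ℝ) - 1) ^ (d - 1) / (d:ℝ) ^ (d - 2)) := by
  have hD3 : (3:ℝ) ≤ (d:ℝ) := by exact_mod_cast hd
  have hD0 : (0:ℝ) < (d:ℝ) := by linarith
  have he2 : (2:ℝ) ≤ (d:ℝ) - 1 := by linarith
  have hφu : φ (fun _ => 1/(d:ℝ)) = (d:ℝ) * gfun (1/(d:ℝ)) := by
    rw [hφ]
    rw [show (∑ _i : Fin d, ((1 - 1/(d:ℝ)) * Real.log (1 - 1/(d:ℝ)) - 1/(d:ℝ) * Real.log (1/(d:ℝ))))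
        = ∑ _i : Fin d, gfun (1/(d:ℝ)) from rfl]
    rw [Finset.sum_const, Finset.card_univ, Fintype.card_fin, nsmul_eq_mul]
  -- value of (d-1)-form equals D * gfun (1/D)
  have eM : ((d:ℝ) - 1) * Real.log ((d:ℝ) - 1) - ((d:ℝ) - 1 - 1) * Real.log ((d:ℝ) - 1 + 1)
      = (d:ℝ) * gfun (1/(d:ℝ)) := by
    rw [show (d:ℝ) - 1 + 1 = (d:ℝ) by ring, show (d:ℝ) - 1 - 1 = (d:ℝ) - 2 by ring,
      value_eq hD3]
  refine ⟨?_, ?_, ?_⟩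
  · intro x hx hsum hne
    have hgsum : φ x = ∑ i, gfun (x i) := hφ x
    rw [hgsum, hφu]
    by_cases hbig : ∀ i, x i ≤ 1/2
    · have hc : (1/(d:ℝ)) ∈ Set.Ioo (0:ℝ) (1/2) := by
        constructor
        · positivity
        · rw [div_lt_div_iff₀ hD0 (by norm_num)]; linarith
      obtain ⟨j, hj⟩ : ∃ j, x j ≠ 1/(d:ℝ) := by
        by_contra h; push_neg at h; exact hne (funext h)
      have hsum_lt : ∑ i, gfun (x i)
          < ∑ _i : Fin d, (gfun (1/(d:ℝ)) + gder (1/(d:ℝ)) * (x _i - 1/(d:ℝ))) := by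
        apply Finset.sum_lt_sum
        · intro i _; exact tangent_le hc ⟨(hx i).1, hbig i⟩
        · exact ⟨j, Finset.mem_univ j, tangent_lt hc ⟨(hx j).1, hbig j⟩ hj⟩
      have hzero : ∑ i : Fin d, (x i - 1/(d:ℝ)) = 0 := by
        rw [Finset.sum_sub_distrib, hsum, Finset.sum_const, Finset.card_univ,
          Fintype.card_fin, nsmul_eq_mul]
        field_simp
        ring
      have heq : ∑ _i : Fin d, (gfun (1/(d:ℝ)) + gder (1/(d:ℝ)) * (x _i - 1/(d:ℝ)))
          = (d:ℝ) * gfun (1/(d:ℝ)) := by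
        rw [Finset.sum_add_distrib, Finset.sum_const, Finset.card_univ, Fintype.card_fin,
          nsmul_eq_mul, ← Finset.mul_sum, hzero, mul_zero, add_zero]
      linarith
    · push_neg at hbig
      obtain ⟨k, hk⟩ := hbig
      have hsplit : x k + ∑ i ∈ Finset.univ.erase k, x i = 1 := by
        rw [Finset.add_sum_erase _ _ (Finset.mem_univ k)]; exact hsum
      set r : ℝ := ∑ i ∈ Finset.univ.erase k, x i with hrdef
      have hr0 : 0 ≤ r := Finset.sum_nonneg fun i _ => (hx i).1
      have hr2 : r < 1/2 := by linarith
      have hxk : x k = 1 - r := by linarith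
      have hgxk : gfun (x k) = - gfun r := by
        rw [hxk]; unfold gfun; rw [show (1:ℝ) - (1 - r) = r by ring]; ring
      have hφsplit : ∑ i, gfun (x i) = gfun (x k) + ∑ i ∈ Finset.univ.erase k, gfun (x i) :=
        (Finset.add_sum_erase _ _ (Finset.mem_univ k)).symm
      have hG0half : Gfun ((d:ℝ) - 1) 0 < Gfun ((d:ℝ) - 1) (1/2) :=
        Gfun_mono he2 ⟨le_refl 0, by norm_num⟩ ⟨by norm_num, le_refl _⟩ (by norm_num)
      have hG0 : Gfun ((d:ℝ) - 1) 0 = 0 := by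
        unfold Gfun gfun; norm_num
      have hGM := G_half_lt he2
      rcases eq_or_lt_of_le hr0 with hr | hr
      · have hzero : ∀ i ∈ Finset.univ.erase k, x i = 0 := by
          intro i hi
          exact (Finset.sum_eq_zero_iff_of_nonneg (fun i _ => (hx i).1)).mp hr.symm i hi
        have hs0 : ∑ i ∈ Finset.univ.erase k, gfun (x i) = 0 :=
          Finset.sum_eq_zero fun i hi => by rw [hzero i hi]; norm_num [gfun]
        have hgr : gfun r = 0 := by rw [← hr]; norm_num [gfun]
        rw [hφsplit, hgxk, hgr, hs0]
        linarith
      · set c : ℝ := r / ((d:ℝ) - 1) with hcdef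
        have hc : c ∈ Set.Ioo (0:ℝ) (1/2) := by
          constructor
          · exact div_pos hr (by linarith)
          · rw [div_lt_iff₀ (by linarith)]; nlinarith
        have hsum_le : ∑ i ∈ Finset.univ.erase k, gfun (x i)
            ≤ ∑ i ∈ Finset.univ.erase k, (gfun c + gder c * (x i - c)) := by
          apply Finset.sum_le_sum
          intro i hi
          apply tangent_le hc
          constructor
          · exact (hx i).1
          · exact le_trans (Finset.single_le_sum (fun j _ => (hx j).1) hi) (le_of_lt hr2)
        have hcard : (Finset.univ.erase k).card = d - 1 := by
          rw [Finset.card_erase_of_mem (Finset.mem_univ k), Finset.card_univ, Fintype.card_fin]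
        have hcardR : ((d - 1 : ℕ) : ℝ) = (d:ℝ) - 1 := by
          have h1 : (1:ℕ) ≤ d := by omega
          push_cast [Nat.cast_sub h1]
          ring
        have hrc : r - ((d:ℝ) - 1) * c = 0 := by
          rw [hcdef]; field_simp; ring
        have heq2 : ∑ i ∈ Finset.univ.erase k, (gfun c + gder c * (x i - c))
            = ((d:ℝ) - 1) * gfun c := by
          rw [Finset.sum_add_distrib, Finset.sum_const, hcard, nsmul_eq_mul, hcardR,
            ← Finset.mul_sum, Finset.sum_sub_distrib, ← hrdef, Finset.sum_const, hcard,
            nsmul_eq_mul, hcardR, hrc, mul_zero, add_zero]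
        have hGr : ∑ i, gfun (x i) ≤ Gfun ((d:ℝ) - 1) r := by
          unfold Gfun
          rw [hφsplit, hgxk, ← hcdef]
          linarith
        have h5 : Gfun ((d:ℝ) - 1) r < Gfun ((d:ℝ) - 1) (1/2) :=
          Gfun_mono he2 ⟨hr0, le_of_lt hr2⟩ ⟨by norm_num, le_refl _⟩ hr2
        linarith
  · rw [hφu, value_eq hD3]
  · rw [hφu, value_eq hD3]
    have hD1 : (0:ℝ) < (d:ℝ) - 1 := by linarith
    rw [Real.log_div (pow_ne_zero _ (ne_of_gt hD1)) (pow_ne_zero _ (ne_of_gt hD0)),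
      Real.log_pow, Real.log_pow]
    have c1 : ((d - 1 : ℕ) : ℝ) = (d:ℝ) - 1 := by
      have h1 : (1:ℕ) ≤ d := by omega
      push_cast [Nat.cast_sub h1]; ring
    have c2 : ((d - 2 : ℕ) : ℝ) = (d:ℝ) - 2 := by
      have h1 : (2:ℕ) ≤ d := by omega
      push_cast [Nat.cast_sub h1]; ring
    rw [c1, c2]
end

section
/- Let G be a finite d-regular simple graph with g vertices and adjacency matrix A, where d ≥ 3. Let R be the dg × dg matrix indexed by the darts of G (ordered pairs (u,v) with uv an edge of G), with R_{(u,v),(p,q)} = 1 if p = v and (p,q) ≠ (v,u), and 0 otherwise. Then for every λ, det(λI − R) = (λ² − 1)^{(d−2)g/2} · det((λ² + d − 1)I − λA). Consequently, the eigenvalues of R are: the two roots β_i^± = α_i/2 ± (α_i²/4 − (d−1))^{1/2} of x² − α_i x + (d−1) = 0 for each eigenvalue α_i of A (i = 1,…,g), together with 1 and −1, each repeated g(d−2)/2 times. -/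
set_option linter.unusedSectionVars false
set_option synthInstance.maxHeartbeats 1000000
set_option maxHeartbeats 1600000
open Polynomial Matrix SimpleGraph Finset
namespace Stmt14


variable {V : Type*} [Fintype V] [DecidableEq V] (G : SimpleGraph V) [DecidableRel G.Adj]
variable {K : Type*} [Field K]

/-- start incidence -/
def Nmat (K : Type*) [Field K] : Matrix G.Dart V K := fun e v => if e.toProd.1 = v then 1 else 0
/-- end incidence -/
def Mmat (K : Type*) [Field K] : Matrix G.Dart V K := fun e v => if e.toProd.2 = v then 1 else 0
/-- symm pairing -/
def Jmat (K : Type*) [Field K] : Matrix G.Dart G.Dart K := fun e f => if f = e.symm then 1 else 0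

lemma JJ : Jmat G K * Jmat G K = 1 := by
  ext e f
  rw [Matrix.mul_apply, Finset.sum_eq_single e.symm]
  · simp [Jmat, Matrix.one_apply, SimpleGraph.Dart.symm_symm, eq_comm]
  · intro b _ hne
    simp [Jmat, hne]
  · simp

lemma sum_dart_fst (u : V) : (∑ e : G.Dart, if e.toProd.1 = u then (1:K) else 0) = (G.degree u : K) := by
  rw [Finset.sum_boole, SimpleGraph.dart_fst_fiber_card_eq_degree]

lemma sum_dart_snd (u : V) : (∑ e : G.Dart, if e.toProd.2 = u then (1:K) else 0) = (G.degree u : K) := by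
  rw [← sum_dart_fst G (K := K) u]
  exact (Fintype.sum_bijective _ (SimpleGraph.Dart.symm_involutive (G := G)).bijective _ _
    (fun e => rfl)).symm

lemma NtM : (Nmat G K)ᵀ * Mmat G K = G.adjMatrix K := by
  ext u v
  rw [Matrix.mul_apply]
  by_cases h : G.Adj u v
  · rw [Finset.sum_eq_single (⟨(u,v), h⟩ : G.Dart)]
    · simp [Nmat, Mmat, Matrix.transpose_apply, h]
    · intro e _ hne
      simp only [Nmat, Mmat, Matrix.transpose_apply]
      rcases eq_or_ne e.toProd.1 u with h1 | h1
      · rcases eq_or_ne e.toProd.2 v with h2 | h2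
        · exact absurd (SimpleGraph.Dart.ext _ _ (Prod.ext h1 h2)) hne
        · simp [h2]
      · simp [h1]
    · simp
  · rw [Finset.sum_eq_zero, SimpleGraph.adjMatrix_apply, if_neg h]
    intro e _
    simp only [Nmat, Mmat, Matrix.transpose_apply]
    rcases eq_or_ne e.toProd.1 u with h1 | h1
    · rcases eq_or_ne e.toProd.2 v with h2 | h2
      · exact absurd (h1 ▸ h2 ▸ e.adj) h
      · simp [h2]
    · simp [h1]

lemma NtJ : (Nmat G K)ᵀ * Jmat G K = (Mmat G K)ᵀ := by
  ext u f
  rw [Matrix.mul_apply]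
  rw [Finset.sum_eq_single f.symm]
  · simp [Nmat, Mmat, Jmat, SimpleGraph.Dart.symm_symm]
  · intro e _ hne
    simp only [Nmat, Jmat, Matrix.transpose_apply]
    have : f ≠ e.symm := by
      intro h; exact hne (by rw [h, SimpleGraph.Dart.symm_symm])
    simp [this]
  · simp

lemma MtM {d : ℕ} (hreg : G.IsRegularOfDegree d) :
    (Mmat G K)ᵀ * Mmat G K = (d : K) • 1 := by
  ext u v
  rw [Matrix.mul_apply]
  rcases eq_or_ne u v with rfl | huv
  · have key : ∀ e : G.Dart, (Mmat G K)ᵀ u e * Mmat G K e u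
        = (if e.toProd.2 = u then (1:K) else 0) := by
      intro e
      simp only [Mmat, Matrix.transpose_apply]
      by_cases h : e.toProd.2 = u <;> simp [h]
    rw [Finset.sum_congr rfl (fun e _ => key e), sum_dart_snd G u, hreg u,
      Matrix.smul_apply, Matrix.one_apply_eq, smul_eq_mul, mul_one]
  · rw [Finset.sum_eq_zero, Matrix.smul_apply, Matrix.one_apply_ne huv, smul_zero]
    intro e _
    simp only [Mmat, Matrix.transpose_apply]
    rcases eq_or_ne e.toProd.2 u with h1 | h1
    · have h2 : e.toProd.2 ≠ v := by rw [h1]; exact huv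
      simp [h2]
    · simp [h1]




/-- the positively oriented darts, w.r.t. an arbitrary identification of `V` with `Fin _`. -/
abbrev Pos : Type _ :=
  {e : G.Dart // (Fintype.equivFin V) e.toProd.1 < (Fintype.equivFin V) e.toProd.2}

lemma pos_symm_aux (e : G.Dart)
    (h : ¬ (Fintype.equivFin V) e.toProd.1 < (Fintype.equivFin V) e.toProd.2) :
    (Fintype.equivFin V) e.symm.toProd.1 < (Fintype.equivFin V) e.symm.toProd.2 := by
  have hne : (Fintype.equivFin V) e.toProd.1 ≠ (Fintype.equivFin V) e.toProd.2 :=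
    fun hc => e.fst_ne_snd ((Fintype.equivFin V).injective hc)
  exact lt_of_le_of_ne (not_lt.mp h) (Ne.symm hne)

/-- darts are (positive darts) ⊕ (positive darts). -/
noncomputable def dartEquiv : G.Dart ≃ (Pos G ⊕ Pos G) where
  toFun e := if h : (Fintype.equivFin V) e.toProd.1 < (Fintype.equivFin V) e.toProd.2
    then Sum.inl ⟨e, h⟩ else Sum.inr ⟨e.symm, pos_symm_aux G e h⟩
  invFun x := Sum.elim (fun a => a.1) (fun a => a.1.symm) x
  left_inv e := by
    by_cases h : (Fintype.equivFin V) e.toProd.1 < (Fintype.equivFin V) e.toProd.2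
    · simp [h]
    · simp [h, SimpleGraph.Dart.symm_symm]
  right_inv x := by
    rcases x with a | a
    · simp only [Sum.elim_inl]; exact dif_pos a.2
    · have h : ¬ (Fintype.equivFin V) a.1.symm.toProd.1
          < (Fintype.equivFin V) a.1.symm.toProd.2 := not_lt.mpr (le_of_lt a.2)
      simp only [Sum.elim_inr, dif_neg h]
      refine (dif_neg h).trans ?_
      rw [Sum.inr.injEq]
      exact Subtype.ext (SimpleGraph.Dart.symm_symm _)

lemma dartEquiv_symm_inl (a : Pos G) : (dartEquiv G).symm (Sum.inl a) = a.1 := rfl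
lemma dartEquiv_symm_inr (a : Pos G) : (dartEquiv G).symm (Sum.inr a) = a.1.symm := rfl

lemma pos_ne_symm (a b : Pos G) : b.1 ≠ a.1.symm := by
  intro h
  have hb := b.2
  rw [h] at hb
  exact absurd hb (not_lt.mpr (le_of_lt a.2))

lemma detJ_submatrix (x : K) :
    (x • (1 : Matrix G.Dart G.Dart K) + Jmat G K).submatrix
        ((dartEquiv G).symm) ((dartEquiv G).symm)
      = Matrix.fromBlocks (x • 1) 1 1 (x • 1) := by
  ext i j
  have symm_inj : Function.Injective (SimpleGraph.Dart.symm : G.Dart → G.Dart) :=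
    (SimpleGraph.Dart.symm_involutive (G := G)).injective
  rcases i with a | a <;> rcases j with b | b <;>
    simp only [Matrix.submatrix_apply, dartEquiv_symm_inl, dartEquiv_symm_inr,
      Matrix.add_apply, Matrix.smul_apply, Matrix.one_apply, Jmat,
      Matrix.fromBlocks_apply₁₁, Matrix.fromBlocks_apply₁₂,
      Matrix.fromBlocks_apply₂₁, Matrix.fromBlocks_apply₂₂, smul_eq_mul]
  · -- (a.1, b.1)
    rw [if_neg (pos_ne_symm G a b), if_congr (Iff.symm Subtype.ext_iff) rfl rfl, add_zero]
  · -- (a.1, b.1.symm)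
    have h1 : a.1 ≠ b.1.symm := fun hc => (pos_ne_symm G b a) hc
    have h2 : ((b.1.symm = a.1.symm) ↔ a = b) := by
      constructor
      · intro hc; exact Subtype.ext (symm_inj hc).symm
      · intro hc; rw [hc]
    rw [if_neg h1, mul_zero, zero_add, if_congr h2 rfl rfl]
  · -- (a.1.symm, b.1)
    have h1 : a.1.symm ≠ b.1 := fun hc => (pos_ne_symm G a b) hc.symm
    have h2 : ((b.1 = a.1.symm.symm) ↔ a = b) := by
      rw [SimpleGraph.Dart.symm_symm]
      constructor
      · intro hc; exact Subtype.ext hc.symm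
      · intro hc; rw [hc]
    rw [if_neg h1, mul_zero, zero_add, if_congr h2 rfl rfl]
  · -- (a.1.symm, b.1.symm)
    have h1 : ((a.1.symm = b.1.symm) ↔ a = b) := by
      constructor
      · intro hc; exact Subtype.ext (symm_inj hc)
      · intro hc; rw [hc]
    have h2 : b.1.symm ≠ a.1.symm.symm := by
      rw [SimpleGraph.Dart.symm_symm]
      exact fun hc => (pos_ne_symm G b a) hc.symm
    rw [if_neg h2, add_zero, if_congr h1 rfl rfl]

lemma detJ (x : K) (hx : x ≠ 0) :
    (x • (1 : Matrix G.Dart G.Dart K) + Jmat G K).det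
      = (x ^ 2 - 1) ^ (Fintype.card (Pos G)) := by
  rw [← Matrix.det_submatrix_equiv_self (dartEquiv G).symm, detJ_submatrix]
  haveI : Invertible (x • (1 : Matrix (Pos G) (Pos G) K)) :=
    ⟨x⁻¹ • 1, by rw [smul_mul_smul_comm, inv_mul_cancel₀ hx, one_mul, one_smul],
      by rw [smul_mul_smul_comm, mul_inv_cancel₀ hx, one_mul, one_smul]⟩
  rw [Matrix.det_fromBlocks₂₂]
  have hinv : ⅟(x • (1 : Matrix (Pos G) (Pos G) K)) = x⁻¹ • 1 :=
    invOf_eq_right_inv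
      (by rw [smul_mul_smul_comm, mul_inv_cancel₀ hx, one_mul, one_smul])
  rw [hinv, one_mul, mul_one]
  have : (x • (1 : Matrix (Pos G) (Pos G) K)) - x⁻¹ • 1 = (x - x⁻¹) • 1 := by
    rw [sub_smul]
  rw [this, Matrix.det_smul, Matrix.det_smul, Matrix.det_one, mul_one, mul_one,
    ← mul_pow]
  congr 1
  field_simp

lemma card_dart (G : SimpleGraph V) [DecidableRel G.Adj] :
    Fintype.card G.Dart = 2 * Fintype.card (Pos G) := by
  rw [Fintype.card_congr (dartEquiv G), Fintype.card_sum, two_mul]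



variable {n : Type*} [Fintype n] [DecidableEq n] {R S : Type*} [CommRing R] [CommRing S]

lemma eval₂_charpoly (M : Matrix n n R) (f : R →+* S) (z : S) :
    Polynomial.eval₂ f z M.charpoly = (z • (1 : Matrix n n S) - M.map f).det := by
  have h : (Matrix.charmatrix M).map (Polynomial.eval₂RingHom f z) = z • 1 - M.map f := by
    ext i j
    by_cases hij : i = j
    · subst hij
      simp [Matrix.charmatrix_apply_eq, Matrix.one_apply]
    · simp [Matrix.charmatrix_apply_ne _ _ _ hij, Matrix.one_apply_ne hij]
  rw [Matrix.charpoly,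
    show Polynomial.eval₂ f z (Matrix.charmatrix M).det
      = Polynomial.eval₂RingHom f z (Matrix.charmatrix M).det from rfl,
    RingHom.map_det, RingHom.mapMatrix_apply, h]


lemma adjMap (f : ℂ →+* K) : (G.adjMatrix ℂ).map f = G.adjMatrix K := by
  ext i j
  simp [SimpleGraph.adjMatrix_apply, apply_ite f]

lemma detAdjK (f : ℂ →+* K) {d g : ℕ} (hg : Fintype.card V = g) (α : Fin g → ℂ)
    (hα : (G.adjMatrix ℂ).charpoly = ∏ i, (X - C (α i)))
    (x : K) (hx : x ≠ 0) :
    ((x^2 + (d:K) - 1) • (1 : Matrix V V K) - x • G.adjMatrix K).det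
      = ∏ i : Fin g, (x^2 - f (α i) * x + ((d:K) - 1)) := by
  set z : K := (x^2 + (d:K) - 1) * x⁻¹ with hz
  have hxz : x * z = x^2 + (d:K) - 1 := by
    rw [hz]; field_simp
  have hm : (x^2 + (d:K) - 1) • (1 : Matrix V V K) - x • G.adjMatrix K
      = x • (z • (1 : Matrix V V K) - (G.adjMatrix ℂ).map f) := by
    rw [adjMap G f, smul_sub, smul_smul, hxz]
  rw [hm, Matrix.det_smul, ← eval₂_charpoly, hα, hg]
  rw [show Polynomial.eval₂ f z (∏ i : Fin g, (X - C (α i)))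
      = Polynomial.eval₂RingHom f z (∏ i : Fin g, (X - C (α i))) from rfl]
  rw [map_prod]
  have hxg : (x : K) ^ g = ∏ _i : Fin g, x := by simp
  rw [hxg, ← Finset.prod_mul_distrib]
  apply Finset.prod_congr rfl
  intro i _
  simp only [coe_eval₂RingHom, eval₂_sub, eval₂_X, eval₂_C]
  rw [mul_sub, hxz]
  ring


lemma MNt (u v : G.Dart) :
    (Mmat G K * (Nmat G K)ᵀ) u v = if v.toProd.1 = u.toProd.2 then 1 else 0 := by
  rw [Matrix.mul_apply]
  simp only [Mmat, Nmat, Matrix.transpose_apply]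
  have key : ∀ w : V, (if u.toProd.2 = w then (1:K) else 0) * (if v.toProd.1 = w then 1 else 0)
      = if u.toProd.2 = w then (if v.toProd.1 = w then (1:K) else 0) else 0 := by
    intro w; by_cases h : u.toProd.2 = w <;> simp [h]
  rw [Finset.sum_congr rfl (fun w _ => key w),
    Finset.sum_ite_eq Finset.univ u.toProd.2 (fun w => if v.toProd.1 = w then (1:K) else 0)]
  simp [eq_comm]

lemma Rdecomp (f : ℂ →+* K) (R : Matrix G.Dart G.Dart ℂ)
    (hR : ∀ a b : G.Dart, R a b = if b.fst = a.snd ∧ b ≠ a.symm then 1 else 0) :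
    R.map f = Mmat G K * (Nmat G K)ᵀ - Jmat G K := by
  ext a b
  rw [Matrix.map_apply, hR a b, Matrix.sub_apply, MNt]
  show _ = _ - (if b = a.symm then (1:K) else 0)
  by_cases h2 : b = a.symm
  · have h1 : b.toProd.1 = a.toProd.2 := by rw [h2]; rfl
    simp [h1, h2]
  · by_cases h1 : b.toProd.1 = a.toProd.2 <;> simp [h1, h2]

lemma det_xR (f : ℂ →+* K) {d : ℕ} (hreg : G.IsRegularOfDegree d)
    (R : Matrix G.Dart G.Dart ℂ)
    (hR : ∀ a b : G.Dart, R a b = if b.fst = a.snd ∧ b ≠ a.symm then 1 else 0)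
    (x : K) (hx : x ≠ 0) (hx2 : x^2 - 1 ≠ 0) :
    (x • (1 : Matrix G.Dart G.Dart K) - R.map f).det
      = (x^2-1) ^ (Fintype.card (Pos G)) * ((x^2-1)⁻¹) ^ (Fintype.card V)
        * ((x^2 + (d:K) - 1) • (1 : Matrix V V K) - x • G.adjMatrix K).det := by
  set J := Jmat G K with hJdef
  set M := Mmat G K with hMdef
  set N := Nmat G K with hNdef
  set c : K := (x^2-1)⁻¹ with hc
  have hJJ : J * J = 1 := JJ G
  have hprod : (x • (1 : Matrix G.Dart G.Dart K) + J) * (x • 1 - J) = (x^2-1) • 1 := by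
    simp only [Matrix.add_mul, Matrix.mul_sub, Matrix.smul_mul, Matrix.mul_smul,
      Matrix.one_mul, Matrix.mul_one, hJJ, smul_add, smul_sub, smul_smul, ← pow_two,
      sub_smul, one_smul]
    abel
  have key : (x • (1 : Matrix G.Dart G.Dart K) + J) * (c • ((x • 1 - J) * M)) = M := by
    rw [Matrix.mul_smul, ← Matrix.mul_assoc, hprod, Matrix.smul_mul, Matrix.one_mul,
      smul_smul, hc, inv_mul_cancel₀ hx2, one_smul]
  have heq : x • (1 : Matrix G.Dart G.Dart K) - R.map f
      = (x • 1 + J) * (1 + (-(c • ((x • 1 - J) * M))) * Nᵀ) := by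
    rw [Rdecomp G f R hR, ← hJdef, ← hMdef, ← hNdef, Matrix.mul_add, Matrix.mul_one,
      Matrix.neg_mul, Matrix.mul_neg, ← Matrix.mul_assoc, key]
    abel
  have hNJM : Nᵀ * ((x • (1 : Matrix G.Dart G.Dart K) - J) * M)
      = x • G.adjMatrix K - (d:K) • 1 := by
    rw [← Matrix.mul_assoc, Matrix.mul_sub, Matrix.mul_smul, Matrix.mul_one,
      NtJ G, ← hMdef, Matrix.sub_mul, Matrix.smul_mul, NtM G, MtM G hreg]
  have hinner : (1 : Matrix V V K) + Nᵀ * (-(c • ((x • 1 - J) * M)))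
      = c • ((x^2 + (d:K) - 1) • (1 : Matrix V V K) - x • G.adjMatrix K) := by
    have h1 : ((x^2 + (d:K) - 1) • (1 : Matrix V V K))
        = (x^2 - 1) • 1 + (d:K) • 1 := by
      rw [← add_smul]; congr 1; ring
    rw [Matrix.mul_neg, Matrix.mul_smul, hNJM, h1]
    simp only [smul_sub, smul_add, smul_smul]
    rw [hc, inv_mul_cancel₀ hx2, one_smul]
    abel
  rw [heq, Matrix.det_mul, detJ G x hx, Matrix.det_one_add_mul_comm, hinner,
    Matrix.det_smul, hc]
  ring

lemma phi_eq : Polynomial.eval₂RingHom (algebraMap ℂ (RatFunc ℂ)) RatFunc.X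
    = (algebraMap ℂ[X] (RatFunc ℂ)) := by
  apply Polynomial.ringHom_ext
  · intro a
    simp [RatFunc.algebraMap_C, RatFunc.algebraMap_eq_C]
  · simp [RatFunc.algebraMap_X]

lemma phi_inj :
    Function.Injective (Polynomial.eval₂RingHom (algebraMap ℂ (RatFunc ℂ)) RatFunc.X) := by
  rw [phi_eq]; exact RatFunc.algebraMap_injective ℂ

lemma ratX_sq_ne : ((RatFunc.X : RatFunc ℂ)^2 - 1) ≠ 0 := by
  intro h
  have h2 : (Polynomial.eval₂RingHom (algebraMap ℂ (RatFunc ℂ)) RatFunc.X) ((X:ℂ[X])^2 - 1)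
      = 0 := by simpa using h
  have h3 : ((X:ℂ[X])^2 - 1) = 0 := by
    apply phi_inj
    simpa using h2
  have h4 : ((X:ℂ[X])^2 - C 1) ≠ 0 := Polynomial.X_pow_sub_C_ne_zero (by norm_num) 1
  rw [_root_.map_one] at h4
  exact h4 h3

lemma detAdj_poly {d g : ℕ} (hg : Fintype.card V = g) (α : Fin g → ℂ)
    (hα : (G.adjMatrix ℂ).charpoly = ∏ i, (X - C (α i))) :
    ((X^2 + C ((d:ℂ)) - 1 : ℂ[X]) • (1 : Matrix V V ℂ[X]) - (X : ℂ[X]) • (G.adjMatrix ℂ).map C).det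
      = ∏ i, (X^2 - C (α i) * X + C ((d:ℂ) - 1)) := by
  apply phi_inj
  set Φ := Polynomial.eval₂RingHom (algebraMap ℂ (RatFunc ℂ)) RatFunc.X with hΦ
  rw [RingHom.map_det, RingHom.mapMatrix_apply]
  have hmap : ((X^2 + C ((d:ℂ)) - 1 : ℂ[X]) • (1 : Matrix V V ℂ[X]) - (X : ℂ[X]) • (G.adjMatrix ℂ).map C).map Φ
      = (((RatFunc.X : RatFunc ℂ))^2 + (d:RatFunc ℂ) - 1) • (1 : Matrix V V (RatFunc ℂ))
        - (RatFunc.X : RatFunc ℂ) • G.adjMatrix (RatFunc ℂ) := by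
    ext i j
    by_cases hij : i = j <;>
      simp [hij, hΦ, Matrix.map_apply, Matrix.sub_apply, Matrix.smul_apply, Matrix.one_apply,
        SimpleGraph.adjMatrix_apply, apply_ite, smul_eq_mul, RatFunc.algebraMap_eq_C,
        map_natCast]
    split_ifs with h
    · exact fun hc => absurd h hc
    · exact fun hc => absurd hc h
  rw [hmap, detAdjK G (algebraMap ℂ (RatFunc ℂ)) hg α hα RatFunc.X RatFunc.X_ne_zero, map_prod]
  apply Finset.prod_congr rfl
  intro i _
  simp [hΦ]

lemma charpolyR_poly {d g : ℕ} (hd : 3 ≤ d) (hreg : G.IsRegularOfDegree d)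
    (hg : Fintype.card V = g) (α : Fin g → ℂ)
    (hα : (G.adjMatrix ℂ).charpoly = ∏ i, (X - C (α i)))
    (R : Matrix G.Dart G.Dart ℂ)
    (hR : ∀ a b : G.Dart, R a b = if b.fst = a.snd ∧ b ≠ a.symm then 1 else 0) :
    R.charpoly = ((X:ℂ[X])^2 - 1) ^ ((d - 2) * g / 2)
      * ∏ i, (X^2 - C (α i) * X + C ((d:ℂ) - 1)) := by
  set m := Fintype.card (Pos G) with hm
  have hm2 : 2 * m = d * g := by
    rw [hm, ← card_dart G, SimpleGraph.dart_card_eq_sum_degrees]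
    rw [Finset.sum_congr rfl (fun v _ => hreg v), Finset.sum_const, Finset.card_univ, hg,
      smul_eq_mul, mul_comm]
  have hgm : g ≤ m := by
    have h3 : 3 * g ≤ d * g := Nat.mul_le_mul_right g hd
    omega
  have hE : (d - 2) * g / 2 = m - g := by
    have h3 : (d - 2) * g = 2 * (m - g) := by
      rw [Nat.sub_mul, ← hm2]
      omega
    rw [h3, Nat.mul_div_cancel_left _ (by norm_num)]
  apply phi_inj
  set x : RatFunc ℂ := RatFunc.X with hxd
  have hx2 : x^2 - 1 ≠ 0 := ratX_sq_ne
  have hLHS : (Polynomial.eval₂RingHom (algebraMap ℂ (RatFunc ℂ)) x) R.charpoly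
      = (x • (1 : Matrix G.Dart G.Dart (RatFunc ℂ)) - R.map (algebraMap ℂ (RatFunc ℂ))).det := by
    rw [coe_eval₂RingHom, eval₂_charpoly]
  rw [hLHS, det_xR G (algebraMap ℂ (RatFunc ℂ)) hreg R hR x RatFunc.X_ne_zero hx2,
    detAdjK G (algebraMap ℂ (RatFunc ℂ)) hg α hα x RatFunc.X_ne_zero]
  rw [_root_.map_mul, map_pow, _root_.map_sub, map_pow, _root_.map_one, map_prod]
  have hq : ∀ i : Fin g, (Polynomial.eval₂RingHom (algebraMap ℂ (RatFunc ℂ)) x)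
      (X^2 - C (α i) * X + C ((d:ℂ) - 1))
      = x^2 - algebraMap ℂ (RatFunc ℂ) (α i) * x + ((d:RatFunc ℂ) - 1) := by
    intro i
    simp [map_natCast]
  rw [Finset.prod_congr rfl (fun i _ => hq i), coe_eval₂RingHom, eval₂_X]
  have hpow : ((x:RatFunc ℂ)^2 - 1)^(Fintype.card (Pos G)) * ((x^2-1)⁻¹)^(Fintype.card V)
      = (x^2 - 1)^((d - 2) * g / 2) := by
    rw [hE, pow_sub₀ _ hx2 hgm, inv_pow, hm]
    exact congrArg (fun t => ((x:RatFunc ℂ)^2-1) ^ (Fintype.card (Pos G))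
      * (((x^2-1)) ^ t)⁻¹) hg
  rw [← hpow]

lemma eval_detAdj_poly {d : ℕ} (lam : ℂ) :
    Polynomial.eval lam (((X^2 + C ((d:ℂ)) - 1 : ℂ[X]) • (1 : Matrix V V ℂ[X])
        - (X : ℂ[X]) • (G.adjMatrix ℂ).map C).det)
      = ((lam^2 + (d:ℂ) - 1) • (1 : Matrix V V ℂ) - lam • G.adjMatrix ℂ).det := by
  rw [show Polynomial.eval lam (((X^2 + C ((d:ℂ)) - 1 : ℂ[X]) • (1 : Matrix V V ℂ[X])
        - (X : ℂ[X]) • (G.adjMatrix ℂ).map C).det)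
      = (Polynomial.evalRingHom lam) (((X^2 + C ((d:ℂ)) - 1 : ℂ[X]) • (1 : Matrix V V ℂ[X])
        - (X : ℂ[X]) • (G.adjMatrix ℂ).map C).det) from rfl,
    RingHom.map_det, RingHom.mapMatrix_apply]
  congr 1
  ext i j
  by_cases hij : i = j <;>
    simp [hij, Matrix.map_apply, Matrix.sub_apply, Matrix.smul_apply, Matrix.one_apply,
      SimpleGraph.adjMatrix_apply, apply_ite, smul_eq_mul]
  split_ifs with h
  · exact fun hc => absurd h hc
  · exact fun hc => absurd hc h

lemma q_monic (a c : ℂ) : ((X:ℂ[X])^2 - C a * X + C c).Monic := by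
  have hrepr : ((X:ℂ[X])^2 - C a * X + C c) = X^2 + (C (-a) * X + C c) := by
    rw [map_neg]; ring
  rw [hrepr]
  apply Polynomial.monic_X_pow_add
  exact lt_of_le_of_lt Polynomial.degree_linear_le (by norm_num)

lemma roots_Xsq_sub_one : ((X:ℂ[X])^2 - 1).roots = {1, -1} := by
  have h : ((X:ℂ[X])^2 - 1) = (X - C 1) * (X - C (-1)) := by
    simp only [_root_.map_one, map_neg]; ring
  rw [h, Polynomial.roots_mul (mul_ne_zero (Polynomial.X_sub_C_ne_zero 1)
    (Polynomial.X_sub_C_ne_zero (-1))), Polynomial.roots_X_sub_C, Polynomial.roots_X_sub_C]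
  rfl

end Stmt14

open Polynomial in
open Classical in
/-- For a finite `d`-regular simple graph `G` (`d ≥ 3`) on `g` vertices with
adjacency matrix `A` (eigenvalues `α₁,…,α_g`), the non-backtracking dart matrix `R`
satisfies `det(λI − R) = (λ² − 1)^{(d−2)g/2} · det((λ² + d − 1)I − λA)` for every `λ`;
consequently the eigenvalues of `R` (roots of its characteristic polynomial, with
multiplicity) are the two roots `β_i^±` of `x² − α_i x + (d − 1) = 0` for `i = 1,…,g`,
together with `1` and `−1`, each repeated `g(d−2)/2` times. -/
theorem stmt_14 {V : Type*} [Fintype V] [DecidableEq V] (G : SimpleGraph V)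
    [DecidableRel G.Adj] (d g : ℕ) (hd : 3 ≤ d)
    (hreg : G.IsRegularOfDegree d) (hg : Fintype.card V = g)
    (α : Fin g → ℂ)
    (hα : (G.adjMatrix ℂ).charpoly = ∏ i, (X - C (α i)))
    (R : Matrix G.Dart G.Dart ℂ)
    (hR : ∀ a b : G.Dart, R a b = if b.fst = a.snd ∧ b ≠ a.symm then 1 else 0) :
    (∀ lam : ℂ,
      Matrix.det (lam • (1 : Matrix G.Dart G.Dart ℂ) - R) =
        (lam ^ 2 - 1) ^ ((d - 2) * g / 2) *
          Matrix.det ((lam ^ 2 + (d:ℂ) - 1) • (1 : Matrix V V ℂ) - lam • G.adjMatrix ℂ)) ∧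
    R.charpoly.roots =
      Multiset.replicate ((d - 2) * g / 2) (1 : ℂ) +
      Multiset.replicate ((d - 2) * g / 2) (-1 : ℂ) +
      ∑ i : Fin g, (X ^ 2 - C (α i) * X + C ((d:ℂ) - 1)).roots := by
  have hP2 := Stmt14.charpolyR_poly G hd hreg hg α hα R hR
  have hP1 := Stmt14.detAdj_poly G (d := d) hg α hα
  have hqne : ∀ i : Fin g, ((X:ℂ[X])^2 - C (α i) * X + C ((d:ℂ) - 1)) ≠ 0 :=
    fun i => (Stmt14.q_monic (α i) ((d:ℂ) - 1)).ne_zero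
  have hprod_ne : (∏ i : Fin g, ((X:ℂ[X])^2 - C (α i) * X + C ((d:ℂ) - 1))) ≠ 0 :=
    Finset.prod_ne_zero_iff.mpr fun i _ => hqne i
  have hx2ne : ((X:ℂ[X])^2 - 1) ≠ 0 := by
    have h4 : ((X:ℂ[X])^2 - C 1) ≠ 0 := Polynomial.X_pow_sub_C_ne_zero (by norm_num) 1
    rwa [_root_.map_one] at h4
  constructor
  · intro lam
    have h1 : (lam • (1 : Matrix G.Dart G.Dart ℂ) - R).det = Polynomial.eval lam R.charpoly := by
      have h2 := Stmt14.eval₂_charpoly R (RingHom.id ℂ) lam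
      rw [show R.map (⇑(RingHom.id ℂ)) = R from by ext a b; simp] at h2
      exact h2.symm
    rw [h1, hP2, ← hP1, eval_mul, eval_pow, eval_sub, eval_pow, eval_X, eval_one,
      Stmt14.eval_detAdj_poly]
  · rw [hP2, Polynomial.roots_mul (mul_ne_zero (pow_ne_zero _ hx2ne) hprod_ne),
      Polynomial.roots_pow, Stmt14.roots_Xsq_sub_one,
      Polynomial.roots_prod _ _ hprod_ne]
    have hins : ({1, -1} : Multiset ℂ) = {1} + {-1} := rfl
    rw [hins, smul_add, Multiset.nsmul_singleton, Multiset.nsmul_singleton]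
    rfl
end
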